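/- Suppose that C = S/Ann_S(F) is a free extension of A = k[t]/(t^n) with fiber B. Then I_0 ∘ G_i ⊆ R∘G_0 + R∘G_1 + ⋯ + R∘G_{i−1} (sum of R-submodules of Q) for every i = 1, …, n−1. -/

import Mathlib

open MvPolynomial

noncomputable section

variable {k : Type*} [Field k]

open Classical in
/-- Contraction action of `g ∈ k[x_1,…]` on `F ∈ k[X_1,…]`: the monomial `x^a` sends
`X^b` to `X^(b-a)` if `a ≤ b` and to `0` otherwise, extended bilinearly. -/
def contract {σ : Type*} (g F : MvPolynomial σ k) : MvPolynomial σ k :=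
  ∑ a ∈ g.support, ∑ b ∈ F.support,
    if a ≤ b then monomial (b - a) (g.coeff a * F.coeff b) else 0

/-- The annihilator `Ann(F) = {g : g ∘ F = 0}` (a set; it is in fact an ideal). -/
def annSet {σ : Type*} (F : MvPolynomial σ k) : Set (MvPolynomial σ k) :=
  {g | contract g F = 0}

/-- The annihilator ideal of `F` (since `annSet F` is closed under the ideal operations,
the span coincides with it). -/
def annIdeal {σ : Type*} (F : MvPolynomial σ k) : Ideal (MvPolynomial σ k) :=
  Ideal.span (annSet F)

/-- `C` is a free module over `A` via the ring map `ι : A → C`. -/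
def freeVia {A C : Type*} [CommRing A] [CommRing C] (ι : A →+* C) : Prop :=
  @Module.Free A C _ _ (Module.compHom C ι)

section Aux

variable {σ : Type*}

open Classical in
lemma contract_eq_sum (g F : MvPolynomial σ k) {s t : Finset (σ →₀ ℕ)}
    (hs : g.support ⊆ s) (ht : F.support ⊆ t) :
    contract g F = ∑ a ∈ s, ∑ b ∈ t,
      if a ≤ b then monomial (b - a) (g.coeff a * F.coeff b) else 0 := by
  unfold contract
  rw [Finset.sum_subset hs (fun a _ ha => Finset.sum_eq_zero fun b _ => by
    simp [MvPolynomial.notMem_support_iff.mp ha])]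
  exact Finset.sum_congr rfl fun a _ => Finset.sum_subset ht fun b _ hb => by
    simp [MvPolynomial.notMem_support_iff.mp hb]

lemma contract_add_left (g g' F : MvPolynomial σ k) :
    contract (g + g') F = contract g F + contract g' F := by
  classical
  rw [contract_eq_sum (g + g') F (s := g.support ∪ g'.support)
      (MvPolynomial.support_add) (subset_refl _),
    contract_eq_sum g F (s := g.support ∪ g'.support)
      (Finset.subset_union_left) (subset_refl _),
    contract_eq_sum g' F (s := g.support ∪ g'.support)
      (Finset.subset_union_right) (subset_refl _),
    ← Finset.sum_add_distrib]
  refine Finset.sum_congr rfl fun a _ => ?_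
  rw [← Finset.sum_add_distrib]
  refine Finset.sum_congr rfl fun b _ => ?_
  rw [MvPolynomial.coeff_add]
  split_ifs with h
  · rw [add_mul, map_add]
  · rw [add_zero]

lemma contract_add_right (g F F' : MvPolynomial σ k) :
    contract g (F + F') = contract g F + contract g F' := by
  classical
  rw [contract_eq_sum g (F + F') (t := F.support ∪ F'.support)
      (subset_refl _) (MvPolynomial.support_add),
    contract_eq_sum g F (t := F.support ∪ F'.support)
      (subset_refl _) (Finset.subset_union_left),
    contract_eq_sum g F' (t := F.support ∪ F'.support)
      (subset_refl _) (Finset.subset_union_right),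
    ← Finset.sum_add_distrib]
  refine Finset.sum_congr rfl fun a _ => ?_
  rw [← Finset.sum_add_distrib]
  refine Finset.sum_congr rfl fun b _ => ?_
  rw [MvPolynomial.coeff_add]
  split_ifs with h
  · rw [mul_add, map_add]
  · rw [add_zero]

@[simp] lemma contract_zero_left (F : MvPolynomial σ k) : contract 0 F = 0 := by
  unfold contract; simp

@[simp] lemma contract_zero_right (g : MvPolynomial σ k) : contract g 0 = 0 := by
  unfold contract; simp

/-- `contract · F` as an additive monoid hom. -/
def contractLHom (F : MvPolynomial σ k) : MvPolynomial σ k →+ MvPolynomial σ k :=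
  AddMonoidHom.mk' (fun g => contract g F) (fun g g' => contract_add_left g g' F)

/-- `contract g ·` as an additive monoid hom. -/
def contractRHom (g : MvPolynomial σ k) : MvPolynomial σ k →+ MvPolynomial σ k :=
  AddMonoidHom.mk' (fun F => contract g F) (fun F F' => contract_add_right g F F')

lemma contract_sum_left {α : Type*} (s : Finset α) (f : α → MvPolynomial σ k)
    (F : MvPolynomial σ k) :
    contract (∑ a ∈ s, f a) F = ∑ a ∈ s, contract (f a) F :=
  map_sum (contractLHom F) f s

lemma contract_sum_right {α : Type*} (s : Finset α) (f : α → MvPolynomial σ k)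
    (g : MvPolynomial σ k) :
    contract g (∑ a ∈ s, f a) = ∑ a ∈ s, contract g (f a) :=
  map_sum (contractRHom g) f s

lemma contract_sub_left (g g' F : MvPolynomial σ k) :
    contract (g - g') F = contract g F - contract g' F :=
  map_sub (contractLHom F) g g'

open Classical in
lemma contract_monomial_monomial (a b : σ →₀ ℕ) (c d : k) :
    contract (monomial a c) (monomial b d)
      = if a ≤ b then monomial (b - a) (c * d) else 0 := by
  by_cases hc : c = 0
  · simp [hc]
  by_cases hd : d = 0
  · simp [hd]
  unfold contract
  rw [MvPolynomial.support_monomial, MvPolynomial.support_monomial, if_neg hc, if_neg hd]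
  simp [MvPolynomial.coeff_monomial]

lemma finsupp_le_sub_iff {a a' b : σ →₀ ℕ} (h : a' ≤ b) : a ≤ b - a' ↔ a + a' ≤ b := by
  rw [Finsupp.le_def, Finsupp.le_def] at *
  constructor <;> intro H i <;>
    have h1 := h i <;> have h2 := H i <;>
      simp only [Finsupp.tsub_apply, Finsupp.add_apply] at * <;> omega

lemma finsupp_sub_sub (b a a' : σ →₀ ℕ) : b - a' - a = b - (a + a') := by
  ext i
  simp only [Finsupp.tsub_apply, Finsupp.add_apply]
  omega

lemma contract_mul (p q F : MvPolynomial σ k) :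
    contract (p * q) F = contract p (contract q F) := by
  classical
  induction p using MvPolynomial.induction_on' with
  | add p1 p2 ih1 ih2 =>
      rw [add_mul, contract_add_left, contract_add_left, ih1, ih2]
  | monomial a c =>
      induction q using MvPolynomial.induction_on' with
      | add q1 q2 ih1 ih2 =>
          rw [mul_add, contract_add_left, contract_add_left q1 q2 F,
            contract_add_right, ih1, ih2]
      | monomial a' c' =>
          induction F using MvPolynomial.induction_on' with
          | add F1 F2 ih1 ih2 =>
              rw [contract_add_right, contract_add_right, contract_add_right, ih1, ih2]
          | monomial b d =>
              rw [MvPolynomial.monomial_mul, contract_monomial_monomial,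
                contract_monomial_monomial]
              by_cases h' : a' ≤ b
              · rw [if_pos h', contract_monomial_monomial]
                by_cases h'' : a + a' ≤ b
                · rw [if_pos h'', if_pos ((finsupp_le_sub_iff h').mpr h''),
                    finsupp_sub_sub, mul_assoc]
                · rw [if_neg h'', if_neg (fun hle => h'' ((finsupp_le_sub_iff h').mp hle))]
              · rw [if_neg h', if_neg (fun hle => h' (le_trans (Finsupp.le_def.mpr
                  (fun i => by simp only [Finsupp.add_apply]; omega)) hle)), contract_zero_right]

/-- `annSet F` is an ideal. -/
def annIdeal' (F : MvPolynomial σ k) : Ideal (MvPolynomial σ k) where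
  carrier := annSet F
  zero_mem' := contract_zero_left F
  add_mem' := fun {g g'} hg hg' => by
    simp only [annSet, Set.mem_setOf_eq] at *
    rw [contract_add_left, hg, hg', add_zero]
  smul_mem' := fun p g hg => by
    simp only [annSet, Set.mem_setOf_eq, smul_eq_mul] at *
    rw [contract_mul, hg, contract_zero_right]

lemma mem_annIdeal_iff {F g : MvPolynomial σ k} :
    g ∈ annIdeal F ↔ contract g F = 0 := by
  have : annIdeal F = annIdeal' F := Ideal.span_eq (annIdeal' F)
  rw [this]
  exact Iff.rfl

/-- `T^m · H`, the basic building blocks in `S = R[t]`. -/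
def TT (m : ℕ) (H : MvPolynomial σ k) : MvPolynomial (Option σ) k :=
  X none ^ m * rename Option.some H

lemma TT_monomial (m : ℕ) (b : σ →₀ ℕ) (d : k) :
    TT m (monomial b d)
      = monomial (Finsupp.single none m + Finsupp.mapDomain Option.some b) d := by
  rw [TT, MvPolynomial.rename_monomial, MvPolynomial.X_pow_eq_monomial,
    MvPolynomial.monomial_mul, one_mul]

lemma TT_add (m : ℕ) (H H' : MvPolynomial σ k) : TT m (H + H') = TT m H + TT m H' := by
  rw [TT, TT, TT, map_add, mul_add]

@[simp] lemma TT_zero (m : ℕ) : TT (σ := σ) (k := k) m 0 = 0 := by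
  rw [TT, map_zero, mul_zero]

lemma optionE_rename (H : MvPolynomial σ k) :
    optionEquivLeft k σ (rename Option.some H) = Polynomial.C H := by
  have key : (optionEquivLeft k σ).toAlgHom.comp
      (rename (R := k) (Option.some : σ → Option σ)) = Polynomial.CAlgHom := by
    apply MvPolynomial.algHom_ext
    intro i
    simp [optionEquivLeft_X_some, Polynomial.CAlgHom]
  have := congrArg (fun f => f H) (congrArg DFunLike.coe key)
  simpa using this

lemma optionE_TT (m : ℕ) (H : MvPolynomial σ k) :
    optionEquivLeft k σ (TT m H) = Polynomial.monomial m H := by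
  rw [TT, map_mul, map_pow, optionEquivLeft_X_none, optionE_rename, mul_comm,
    Polynomial.C_mul_X_pow_eq_monomial]

/-- The coefficient of `T^m` in an element of `S`. -/
def sliceM (m : ℕ) (D : MvPolynomial (Option σ) k) : MvPolynomial σ k :=
  ((optionEquivLeft k σ) D).coeff m

lemma sliceM_add (m : ℕ) (D D' : MvPolynomial (Option σ) k) :
    sliceM m (D + D') = sliceM m D + sliceM m D' := by
  rw [sliceM, sliceM, sliceM, map_add, Polynomial.coeff_add]

@[simp] lemma sliceM_zero (m : ℕ) : sliceM (σ := σ) (k := k) m 0 = 0 := by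
  rw [sliceM, map_zero, Polynomial.coeff_zero]

/-- `sliceM m` as an additive monoid hom. -/
def sliceHom (m : ℕ) : MvPolynomial (Option σ) k →+ MvPolynomial σ k :=
  AddMonoidHom.mk' (sliceM m) (sliceM_add m)

lemma sliceM_sum {α : Type*} (m : ℕ) (s : Finset α) (f : α → MvPolynomial (Option σ) k) :
    sliceM m (∑ a ∈ s, f a) = ∑ a ∈ s, sliceM m (f a) :=
  map_sum (sliceHom m) f s

open Classical in
lemma sliceM_TT (m' m : ℕ) (H : MvPolynomial σ k) :
    sliceM m' (TT m H) = if m = m' then H else 0 := by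
  rw [sliceM, optionE_TT, Polynomial.coeff_monomial]

lemma TT_decomp (s : MvPolynomial (Option σ) k) {N : ℕ}
    (hN : ((optionEquivLeft k σ) s).natDegree < N) :
    s = ∑ m ∈ Finset.range N, TT m (sliceM m s) := by
  apply (optionEquivLeft k σ).injective
  rw [map_sum]
  conv_lhs => rw [Polynomial.as_sum_range' _ N hN]
  exact Finset.sum_congr rfl fun m _ => by rw [optionE_TT]; rfl

@[simp] lemma opt_apply_none (m : ℕ) (a : σ →₀ ℕ) :
    (Finsupp.single (none : Option σ) m + Finsupp.mapDomain Option.some a) none = m := by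
  rw [Finsupp.add_apply, Finsupp.single_eq_same,
    Finsupp.mapDomain_notin_range _ _ (by simp), add_zero]

@[simp] lemma opt_apply_some (m : ℕ) (a : σ →₀ ℕ) (i : σ) :
    (Finsupp.single (none : Option σ) m + Finsupp.mapDomain Option.some a) (some i) = a i := by
  rw [Finsupp.add_apply, Finsupp.single_eq_of_ne (by simp),
    Finsupp.mapDomain_apply (Option.some_injective σ), zero_add]

@[simp] lemma mapDomain_some_none (a : σ →₀ ℕ) :
    (Finsupp.mapDomain (Option.some : σ → Option σ) a) none = 0 :=
  Finsupp.mapDomain_notin_range _ _ (by simp)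

@[simp] lemma mapDomain_some_some (a : σ →₀ ℕ) (i : σ) :
    (Finsupp.mapDomain (Option.some : σ → Option σ) a) (some i) = a i :=
  Finsupp.mapDomain_apply (Option.some_injective σ) _ _

lemma option_le {m e : ℕ} {a b : σ →₀ ℕ} :
    Finsupp.single (none : Option σ) m + Finsupp.mapDomain Option.some a ≤
      Finsupp.single (none : Option σ) e + Finsupp.mapDomain Option.some b
    ↔ m ≤ e ∧ a ≤ b := by
  constructor
  · intro h
    rw [Finsupp.le_def] at h
    refine ⟨by simpa using h none, ?_⟩
    rw [Finsupp.le_def]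
    intro i
    simpa using h (some i)
  · rintro ⟨h1, h2⟩
    rw [Finsupp.le_def]
    intro o
    cases o with
    | none => simpa using h1
    | some i => simpa using Finsupp.le_def.mp h2 i

lemma option_sub (m e : ℕ) (a b : σ →₀ ℕ) :
    (Finsupp.single (none : Option σ) e + Finsupp.mapDomain Option.some b)
      - (Finsupp.single (none : Option σ) m + Finsupp.mapDomain Option.some a)
    = Finsupp.single (none : Option σ) (e - m) + Finsupp.mapDomain Option.some (b - a) := by
  ext o
  cases o with
  | none => simp [Finsupp.tsub_apply, Finsupp.add_apply]
  | some i => simp [Finsupp.tsub_apply, Finsupp.add_apply, Finsupp.single_apply]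

open Classical in
lemma contract_TT (m e : ℕ) (p H : MvPolynomial σ k) :
    contract (TT m p) (TT e H) = if m ≤ e then TT (e - m) (contract p H) else 0 := by
  induction p using MvPolynomial.induction_on' with
  | add p1 p2 ih1 ih2 =>
      rw [TT_add, contract_add_left, ih1, ih2, contract_add_left]
      split_ifs with h
      · rw [TT_add]
      · rw [add_zero]
  | monomial a c =>
      induction H using MvPolynomial.induction_on' with
      | add H1 H2 ih1 ih2 =>
          rw [TT_add, contract_add_right, ih1, ih2, contract_add_right]
          split_ifs with h
          · rw [TT_add]
          · rw [add_zero]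
      | monomial b d =>
          rw [TT_monomial, TT_monomial, contract_monomial_monomial,
            contract_monomial_monomial]
          simp only [option_le]
          by_cases hm : m ≤ e
          · by_cases hab : a ≤ b
            · rw [if_pos ⟨hm, hab⟩, if_pos hm, if_pos hab, option_sub, TT_monomial]
            · rw [if_neg (fun h => hab h.2), if_pos hm, if_neg hab, TT_zero]
          · rw [if_neg (fun h => hm h.1), if_neg hm]

end Aux

/-- Theorem 3.2 (necessity part).  With the setup of the main theorem, if
`F = T^{n-1}G_0 + ⋯ + G_{n-1}` defines a free extension `C = S/Ann(F)` of
`A = k[t]/(t^n)` with fiber `B = R/Ann(F_B)`, then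
`I_0 ∘ G_i ⊆ R∘G_0 + R∘G_1 + ⋯ + R∘G_{i-1}` for every `i = 1, …, n-1`. -/
theorem main_theorem_necessity (r n : ℕ) (hn : 1 ≤ n) (jB : ℕ)
    (G : ℕ → MvPolynomial (Fin r) k) (hG0 : G 0 ≠ 0)
    (hGhom : ∀ i < n, (G i).IsHomogeneous (jB + i))
    (F : MvPolynomial (Option (Fin r)) k)
    (hF : F = ∑ i ∈ Finset.range n, X none ^ (n - 1 - i) * rename Option.some (G i))
    (I : ℕ → Ideal (MvPolynomial (Fin r) k))
    (hI0 : I 0 = annIdeal (G 0))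
    (hIsucc : ∀ i, I (i + 1) = (I i).colon (annIdeal (G (i + 1))))
    -- the algebra maps ι : A → C (induced by t ↦ t) and π : C → B (induced by x_i ↦ x_i, t ↦ 0)
    (ι : (Polynomial k ⧸ Ideal.span {(Polynomial.X : Polynomial k) ^ n}) →ₐ[k]
      (MvPolynomial (Option (Fin r)) k ⧸ annIdeal F))
    (hι : ι (Ideal.Quotient.mk _ Polynomial.X) = Ideal.Quotient.mk _ (X none))
    (π : (MvPolynomial (Option (Fin r)) k ⧸ annIdeal F) →ₐ[k]
      (MvPolynomial (Fin r) k ⧸ annIdeal (G 0)))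
    (hπ : ∀ s : MvPolynomial (Option (Fin r)) k,
      π (Ideal.Quotient.mk _ s)
        = Ideal.Quotient.mk _ (aeval (fun o => o.elim 0 fun i => X i) s))
    -- C is a free extension of A with fiber B:
    (hfree : freeVia ι.toRingHom)
    (hsurj : Function.Surjective π)
    (hker : RingHom.ker π = Ideal.span {Ideal.Quotient.mk (annIdeal F) (X none)}) :
    -- then I_0 ∘ G_i ⊆ R∘G_0 + ⋯ + R∘G_{i-1} for i = 1, …, n-1
    ∀ i, 1 ≤ i → i ≤ n - 1 → ∀ g ∈ I 0, ∃ h : ℕ → MvPolynomial (Fin r) k,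
      contract g (G i) = ∑ j ∈ Finset.range i, contract (h j) (G j) := by
  classical
  intro i hi1 hi2 g hg
  rw [hI0] at hg
  set Rg : MvPolynomial (Option (Fin r)) k := rename Option.some g with hRgdef
  -- `Rg` maps to `0` under `π`
  have hπg : π (Ideal.Quotient.mk _ Rg) = 0 := by
    rw [hπ, hRgdef, MvPolynomial.aeval_rename]
    have heq : aeval ((fun o : Option (Fin r) => o.elim 0 fun i => X i) ∘ Option.some) g
        = g := by
      have : ((fun o : Option (Fin r) => o.elim 0 fun i => X i) ∘ Option.some)
          = (X : Fin r → MvPolynomial (Fin r) k) := rfl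
      rw [this, MvPolynomial.aeval_X_left_apply]
    rw [heq]
    exact Ideal.Quotient.eq_zero_iff_mem.mpr hg
  have hmem : Ideal.Quotient.mk (annIdeal F) Rg ∈ RingHom.ker π :=
    RingHom.mem_ker.mpr hπg
  rw [hker, Ideal.mem_span_singleton] at hmem
  obtain ⟨c, hc⟩ := hmem
  obtain ⟨s, rfl⟩ := Ideal.Quotient.mk_surjective c
  -- hence `Rg - X none * s` annihilates `F`
  have hmain : contract Rg F = contract (X none * s) F := by
    have hann : Rg - X none * s ∈ annIdeal F := by
      rw [← Ideal.Quotient.eq_zero_iff_mem, map_sub, map_mul, ← hc, sub_self]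
    have h0 := mem_annIdeal_iff.mp hann
    rw [contract_sub_left] at h0
    exact sub_eq_zero.mp h0
  -- slice computation of the left side
  have hRgTT : Rg = TT 0 g := by rw [TT, pow_zero, one_mul]
  have hL : contract Rg F
      = ∑ i' ∈ Finset.range n, TT (n - 1 - i') (contract g (G i')) := by
    rw [hF, contract_sum_right]
    refine Finset.sum_congr rfl fun i' _ => ?_
    rw [hRgTT,
      show X none ^ (n - 1 - i') * rename Option.some (G i') = TT (n - 1 - i') (G i') from
        rfl,
      contract_TT, if_pos (Nat.zero_le _), Nat.sub_zero]
  have hsliceL : sliceM (n - 1 - i) (contract Rg F) = contract g (G i) := by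
    rw [hL, sliceM_sum,
      Finset.sum_eq_single_of_mem i (Finset.mem_range.mpr (by omega))
        (fun i' hi' hne => by
          rw [sliceM_TT, if_neg (by simp only [Finset.mem_range] at hi'; omega)]),
      sliceM_TT, if_pos rfl]
  -- slice computation of the right side
  set N : ℕ := ((optionEquivLeft k (Fin r)) s).natDegree + n with hNdef
  have hdec : s = ∑ m ∈ Finset.range N, TT m (sliceM m s) := TT_decomp s (by omega)
  have hXs : X none * s = ∑ m ∈ Finset.range N, TT (m + 1) (sliceM m s) := by
    conv_lhs => rw [hdec]
    rw [Finset.mul_sum]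
    exact Finset.sum_congr rfl fun m _ => by
      rw [TT, TT, ← mul_assoc, ← pow_succ']
  have hR : contract (X none * s) F
      = ∑ m ∈ Finset.range N, ∑ i' ∈ Finset.range n,
          (if m + 1 ≤ n - 1 - i'
            then TT (n - 1 - i' - (m + 1)) (contract (sliceM m s) (G i')) else 0) := by
    rw [hXs, hF, contract_sum_left]
    refine Finset.sum_congr rfl fun m _ => ?_
    rw [contract_sum_right]
    refine Finset.sum_congr rfl fun i' _ => ?_
    rw [show X none ^ (n - 1 - i') * rename Option.some (G i') = TT (n - 1 - i') (G i') from
      rfl, contract_TT]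
  have hsliceR : sliceM (n - 1 - i) (contract (X none * s) F)
      = ∑ m ∈ Finset.range i, contract (sliceM m s) (G (i - 1 - m)) := by
    rw [hR, sliceM_sum]
    have hinner : ∀ m ∈ Finset.range N,
        sliceM (n - 1 - i) (∑ i' ∈ Finset.range n,
          (if m + 1 ≤ n - 1 - i'
            then TT (n - 1 - i' - (m + 1)) (contract (sliceM m s) (G i')) else 0))
        = if m < i then contract (sliceM m s) (G (i - 1 - m)) else 0 := by
      intro m _
      rw [sliceM_sum]
      by_cases hmi : m < i
      · rw [if_pos hmi,
          Finset.sum_eq_single_of_mem (i - 1 - m) (Finset.mem_range.mpr (by omega))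
            (fun i' hi' hne => by
              simp only [Finset.mem_range] at hi'
              split_ifs with hcond
              · rw [sliceM_TT, if_neg (by omega)]
              · exact sliceM_zero _),
          if_pos (by omega : m + 1 ≤ n - 1 - (i - 1 - m)), sliceM_TT,
          if_pos (by omega)]
      · rw [if_neg hmi]
        refine Finset.sum_eq_zero fun i' hi' => ?_
        simp only [Finset.mem_range] at hi'
        split_ifs with hcond
        · rw [sliceM_TT, if_neg (by omega)]
        · exact sliceM_zero _
    rw [Finset.sum_congr rfl hinner,
      ← Finset.sum_subset (Finset.range_subset_range.mpr (show i ≤ N by omega))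
        (fun m _ hm => if_neg (by simp only [Finset.mem_range] at hm; omega))]
    exact Finset.sum_congr rfl fun m hm =>
      if_pos (Finset.mem_range.mp hm)
  -- combine
  have hkey : contract g (G i)
      = ∑ m ∈ Finset.range i, contract (sliceM m s) (G (i - 1 - m)) := by
    rw [← hsliceL, hmain, hsliceR]
  refine ⟨fun j => sliceM (i - 1 - j) s, ?_⟩
  rw [hkey, ← Finset.sum_range_reflect (fun m => contract (sliceM m s) (G (i - 1 - m))) i]
  refine Finset.sum_congr rfl fun j hj => ?_
  have hji : i - 1 - (i - 1 - j) = j := by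
    simp only [Finset.mem_range] at hj; omega
  rw [hji]

end
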